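/- arXiv:math/0405079 — 5 statements merged into one kernel-verified Lean document; each statement's English description precedes it below -/
import Mathlib

section
/- With the notation of the unique factorization σ∘α = σ_*(α)∘α^*(σ) (with σ_*(α) an order-preserving injection and α^*(σ) a permutation), for injective maps β : Fin l → Fin m and α : Fin m → Fin n and a permutation σ of Fin n one has (α∘β)^*(σ) = β^*(α^*(σ)), i.e. the assignment σ ↦ α^*(σ) is contravariantly functorial in α. -/
/-- **Contravariant functoriality of the permutation part of the factorization.**
For an injection `α : Fin m → Fin n` and a permutation `σ` of `Fin n`, the unique
factorization `σ ∘ α = σ_*(α) ∘ α^*(σ)` has `σ_*(α)` an order-preserving injection and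
`α^*(σ)` a permutation of `Fin m`.  Given injections `β : Fin l → Fin m`, `α : Fin m → Fin n`
and a permutation `σ` of `Fin n`, one has `(α ∘ β)^*(σ) = β^*(α^*(σ))`.

Here `ρ` plays the role of `(α ∘ β)^*(σ)` (via the factorization `h1`), `τ` plays the role
of `α^*(σ)` (via `h2`), and `π` plays the role of `β^*(α^*(σ)) = β^*(τ)` (via `h3`). -/
theorem units_traces_star_functorial (l m n : ℕ)
    (β : Fin l → Fin m) (hβ : Function.Injective β)
    (α : Fin m → Fin n) (hα : Function.Injective α)
    (σ : Equiv.Perm (Fin n))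
    (γ : Fin l → Fin n) (ρ : Equiv.Perm (Fin l)) (hγ : StrictMono γ)
    (h1 : σ ∘ (α ∘ β) = γ ∘ ⇑ρ)
    (δ : Fin m → Fin n) (τ : Equiv.Perm (Fin m)) (hδ : StrictMono δ)
    (h2 : σ ∘ α = δ ∘ ⇑τ)
    (ε : Fin l → Fin m) (π : Equiv.Perm (Fin l)) (hε : StrictMono ε)
    (h3 : ⇑τ ∘ β = ε ∘ ⇑π) :
    ρ = π := by
  have key : γ ∘ ⇑ρ = (δ ∘ ε) ∘ ⇑π := by
    funext x
    have e1 := congrFun h1 x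
    have e2 := congrFun h2 (β x)
    have e3 := congrFun h3 x
    simp only [Function.comp_apply] at e1 e2 e3 ⊢
    rw [← e1, e2, e3]
  have hδε : StrictMono (δ ∘ ε) := hδ.comp hε
  have hrange : Set.range γ = Set.range (δ ∘ ε) := by
    rw [← Function.Surjective.range_comp ρ.surjective γ, key,
      Function.Surjective.range_comp π.surjective]
  haveI : WellFoundedLT (Fin l) := inferInstance
  have hγδε : γ = δ ∘ ε := (StrictMono.range_inj (β := Fin l) (γ := Fin n) hγ hδε).1 hrange
  rw [hγδε] at key
  exact Equiv.ext fun x => hδε.injective (congrFun key x)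
end

section
/- For a discrete commutative ring R and n×n matrices A⁰,…,Aᵏ over R, the Hochschild multi-trace tr(A⁰⊗⋯⊗Aᵏ) = Σ_{s₀,…,s_k} a⁰_{s_k s₀} ⊗ ⋯ ⊗ aᵏ_{s_{k-1} s_k} is invariant under the cyclic operator: applying the cyclic permutation (A⁰,…,Aᵏ) ↦ (Aᵏ, A⁰,…,A^{k-1}) and then taking the multi-trace equals applying the cyclic permutation of tensor factors to tr(A⁰⊗⋯⊗Aᵏ). -/
open scoped TensorProduct

/-- The Hochschild multi-trace `tr(A⁰ ⊗ ⋯ ⊗ Aᵏ) = Σ_{s₀,…,s_k} a⁰_{s_k s₀} ⊗ ⋯ ⊗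
aᵏ_{s_{k-1} s_k}`, as an element of the `(k+1)`-fold tensor power `R^{⊗(k+1)}`.  Factor
`i` is `aⁱ_{s_{i-1}, s_i}` where the index `i - 1` is taken cyclically in `Fin (k+1)`. -/
noncomputable def multiTrace {R : Type} [CommRing R] {k : ℕ} {ι : Type} [Fintype ι]
    (A : Fin (k + 1) → Matrix ι ι R) : PiTensorProduct R (fun _ : Fin (k + 1) => R) :=
  ∑ s : Fin (k + 1) → ι, PiTensorProduct.tprod R (fun i => A i (s (i - 1)) (s i))

/-- **Cyclic invariance of the Hochschild multi-trace.**  Applying the cyclic permutation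
`(A⁰,…,Aᵏ) ↦ (Aᵏ, A⁰,…,A^{k-1})` to the matrices and then taking the multi-trace equals
applying the cyclic permutation of tensor factors (moving the last factor to the front,
i.e. reindexing along `i ↦ i + 1`) to `tr(A⁰ ⊗ ⋯ ⊗ Aᵏ)`. -/
theorem units_traces_multitrace_cyclic {R : Type} [CommRing R] (k n : ℕ)
    (A : Fin (k + 1) → Matrix (Fin n) (Fin n) R) :
    multiTrace (fun i => A (i - 1)) =
      PiTensorProduct.reindex R (fun _ : Fin (k + 1) => R)
        (Equiv.addRight (1 : Fin (k + 1))) (multiTrace A) := by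
  simp only [multiTrace, map_sum, PiTensorProduct.reindex_tprod]
  refine Fintype.sum_equiv (Equiv.arrowCongr ((Equiv.addRight (1 : Fin (k+1))).symm)
    (Equiv.refl (Fin n))) _ _ ?_
  intro s
  congr 1
  funext i
  simp [Equiv.arrowCongr, Equiv.addRight, sub_sub, sub_add_cancel, sub_eq_add_neg]
end

section
/- Let S be a finite pointed set with non-basepoint part S̄, and let 𝓓(S) be the category whose objects are functors θ from the poset of subsets of S̄ to the category 𝓘 of finite sets and injections, such that whenever U ∩ V = ∅ the diagram θ_U → θ_{U∪V} ← θ_V exhibits θ_{U∪V} as a coproduct (disjoint union) of finite sets; morphisms are arbitrary natural transformations. Then the restriction functor π_S : 𝓓(S) → 𝓘^{S̄} sending θ to its values on singletons is an equivalence of categories. -/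
open CategoryTheory

/-- The objects of the category `𝓘`: the finite sets `{1,…,n}`, encoded by their
cardinality. -/
structure IInj where
  n : ℕ

/-- The category `𝓘` of finite sets and injective maps. -/
instance : Category IInj where
  Hom a b := { f : Fin a.n → Fin b.n // Function.Injective f }
  id _ := ⟨id, fun _ _ h => h⟩
  comp f g := ⟨g.1 ∘ f.1, g.2.comp f.2⟩
  id_comp _ := rfl
  comp_id _ := rfl
  assoc _ _ _ := rfl

/-- A functor `θ` from the poset of subsets of `S̄` to `𝓘` is a *sum diagram* if for all
disjoint `U, V` the diagram `θ_U → θ_{U∪V} ← θ_V` exhibits `θ_{U∪V}` as a coproduct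
(disjoint union) of finite sets, i.e. the induced map `θ_U ⊔ θ_V → θ_{U∪V}` is a
bijection. -/
def IsSumDiagram {σ : Type} [DecidableEq σ] (θ : Finset σ ⥤ IInj) : Prop :=
  ∀ U V : Finset σ, Disjoint U V →
    Function.Bijective
      (Sum.elim (θ.map (homOfLE (le_sup_left : U ≤ U ⊔ V))).1
        (θ.map (homOfLE (le_sup_right : V ≤ U ⊔ V))).1)

/-- The category `𝓓(S)` of `S̄`-indexed sum diagrams in `𝓘`; morphisms are arbitrary
natural transformations. -/
abbrev SumDiagramCat (σ : Type) [DecidableEq σ] := ObjectProperty.FullSubcategory (IsSumDiagram (σ := σ))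

/-- The restriction functor `π_S : 𝓓(S) → 𝓘^{S̄}` sending a sum diagram to its values
on singletons. -/
def piS (σ : Type) [DecidableEq σ] : SumDiagramCat σ ⥤ (σ → IInj) where
  obj θ := fun s => θ.obj.obj {s}
  map η := fun s => η.hom.app {s}
  map_id _ := rfl
  map_comp _ _ := rfl

set_option linter.unusedSectionVars false

namespace SDAux

variable {σ : Type} [DecidableEq σ]

lemma mem_of_le {U V : Finset σ} (h : U ≤ V) {s : σ} (hs : s ∈ U) : s ∈ V :=
  Finset.le_iff_subset.mp h hs

def incl {U : Finset σ} {s : σ} (hs : s ∈ U) : (({s} : Finset σ) ⟶ U) :=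
  homOfLE (Finset.singleton_subset_iff.mpr hs)

def toU (θ : Finset σ ⥤ IInj) (U : Finset σ) :
    (Σ s : {x // x ∈ U}, Fin (θ.obj {s.1}).n) → Fin (θ.obj U).n :=
  fun p => (θ.map (incl p.1.2)).1 p.2

lemma isEmpty_empty {θ : Finset σ ⥤ IInj} (hθ : IsSumDiagram θ) :
    IsEmpty (Fin (θ.obj (∅ : Finset σ)).n) := by
  constructor
  intro x
  have h := (hθ ∅ ∅ disjoint_bot_left).1
  have h2 : (Sum.inl x : Fin (θ.obj (∅:Finset σ)).n ⊕ Fin (θ.obj (∅:Finset σ)).n)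
      = Sum.inr x := h rfl
  simp at h2

end SDAux

namespace SDAux

variable {σ : Type} [DecidableEq σ]

lemma toU_surjective {θ : Finset σ ⥤ IInj} (hθ : IsSumDiagram θ) (U : Finset σ) :
    Function.Surjective (toU θ U) := by
  classical
  induction U using Finset.induction_on with
  | empty =>
    intro x
    exact ((isEmpty_empty hθ).false x).elim
  | @insert a U ha IH =>
    have hUV : insert a U = {a} ⊔ U := by
      rw [Finset.sup_eq_union, Finset.insert_eq]
    rw [hUV]
    intro x
    obtain ⟨y, hy⟩ := (hθ {a} U (by simpa using ha)).2 x
    cases y with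
    | inl y =>
      exact ⟨⟨⟨a, by simp⟩, y⟩, hy⟩
    | inr y =>
      obtain ⟨⟨⟨s, hs⟩, z⟩, hz⟩ := IH y
      refine ⟨⟨⟨s, by simp [hs]⟩, z⟩, ?_⟩
      show (θ.map (incl (show s ∈ {a} ⊔ U by simp [hs]))).1 z = x
      have hcomp : (incl (show s ∈ {a} ⊔ U by simp [hs]) : ({s}:Finset σ) ⟶ {a} ⊔ U)
          = incl hs ≫ homOfLE le_sup_right := rfl
      rw [hcomp, θ.map_comp]
      show (θ.map (homOfLE le_sup_right)).1 ((θ.map (incl hs)).1 z) = x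
      have hz' : (θ.map (incl hs)).1 z = y := hz
      rw [hz']
      exact hy

lemma toU_injective {θ : Finset σ ⥤ IInj} (hθ : IsSumDiagram θ) (U : Finset σ) :
    Function.Injective (toU θ U) := by
  rintro ⟨⟨s, hs⟩, y⟩ ⟨⟨t, ht⟩, z⟩ h
  by_cases hst : s = t
  · subst hst
    have hy : y = z := (θ.map (incl hs)).2 h
    subst hy; rfl
  · exfalso
    have hst' : Disjoint ({s} : Finset σ) {t} := Finset.disjoint_singleton.mpr hst
    have hW : ({s} : Finset σ) ⊔ {t} ≤ U :=
      sup_le (Finset.singleton_subset_iff.mpr hs) (Finset.singleton_subset_iff.mpr ht)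
    have h1 : (incl hs : ({s}:Finset σ) ⟶ U) = homOfLE le_sup_left ≫ homOfLE hW := rfl
    have h2 : (incl ht : ({t}:Finset σ) ⟶ U) = homOfLE le_sup_right ≫ homOfLE hW := rfl
    have h0 : (θ.map (incl hs)).1 y = (θ.map (incl ht)).1 z := h
    have h' : (θ.map (homOfLE hW)).1 ((θ.map (homOfLE (le_sup_left : ({s}:Finset σ) ≤ {s} ⊔ {t}))).1 y)
        = (θ.map (homOfLE hW)).1 ((θ.map (homOfLE (le_sup_right : ({t}:Finset σ) ≤ {s} ⊔ {t}))).1 z) := by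
      rw [h1, h2, θ.map_comp, θ.map_comp] at h0
      exact h0
    have h'' := (θ.map (homOfLE hW)).2 h'
    have h3 : (Sum.inl y : Fin (θ.obj {s}).n ⊕ Fin (θ.obj {t}).n) = Sum.inr z :=
      (hθ {s} {t} hst').1 h''
    simp at h3

end SDAux

namespace SDAux

variable {σ : Type} [DecidableEq σ]

noncomputable def PhiE {θ : Finset σ ⥤ IInj} (hθ : IsSumDiagram θ) (U : Finset σ) :
    (Σ s : {x // x ∈ U}, Fin (θ.obj {s.1}).n) ≃ Fin (θ.obj U).n :=
  Equiv.ofBijective (toU θ U) ⟨toU_injective hθ U, toU_surjective hθ U⟩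

lemma map_toU (θ : Finset σ ⥤ IInj) {U V : Finset σ} (f : U ⟶ V)
    (p : Σ s : {x // x ∈ U}, Fin (θ.obj {s.1}).n) :
    (θ.map f).1 (toU θ U p) = toU θ V ⟨⟨p.1.1, mem_of_le (leOfHom f) p.1.2⟩, p.2⟩ := by
  rcases p with ⟨⟨s, hs⟩, y⟩
  show (θ.map (incl hs) ≫ θ.map f).1 y = (θ.map (incl (mem_of_le (leOfHom f) hs))).1 y
  rw [← θ.map_comp]
  rfl

lemma toU_singleton (θ : Finset σ ⥤ IInj) {s : σ} (h : s ∈ ({s} : Finset σ))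
    (y : Fin (θ.obj {s}).n) : toU θ {s} ⟨⟨s, h⟩, y⟩ = y := by
  show (θ.map (incl h)).1 y = y
  have h1 : (incl h : ({s} : Finset σ) ⟶ {s}) = 𝟙 _ := rfl
  rw [h1, θ.map_id]
  rfl

lemma symm_singleton {θ : Finset σ ⥤ IInj} (hθ : IsSumDiagram θ) (s : σ)
    (x : Fin (θ.obj {s}).n) :
    (PhiE hθ {s}).symm x = ⟨⟨s, Finset.mem_singleton_self s⟩, x⟩ :=
  (Equiv.symm_apply_eq _).mpr (toU_singleton θ _ x).symm

variable {θ θ' : Finset σ ⥤ IInj}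

def mapSigma (g : ∀ s : σ, θ.obj {s} ⟶ θ'.obj {s}) (U : Finset σ)
    (p : Σ s : {x // x ∈ U}, Fin (θ.obj {s.1}).n) :
    Σ s : {x // x ∈ U}, Fin (θ'.obj {s.1}).n :=
  ⟨p.1, (g p.1.1).1 p.2⟩

lemma mapSigma_injective (g : ∀ s : σ, θ.obj {s} ⟶ θ'.obj {s}) (U : Finset σ) :
    Function.Injective (mapSigma g U) := by
  rintro ⟨⟨s, hs⟩, y⟩ ⟨⟨t, ht⟩, z⟩ h
  rw [Sigma.ext_iff] at h
  obtain ⟨h1, h2⟩ := h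
  obtain rfl : s = t := congrArg Subtype.val h1
  obtain rfl : y = z := (g s).2 (eq_of_heq h2)
  rfl

noncomputable def extendNat (hθ : IsSumDiagram θ) (hθ' : IsSumDiagram θ')
    (g : ∀ s : σ, θ.obj {s} ⟶ θ'.obj {s}) : θ ⟶ θ' where
  app U := ⟨fun x => toU θ' U (mapSigma g U ((PhiE hθ U).symm x)),
    (toU_injective hθ' U).comp ((mapSigma_injective g U).comp (PhiE hθ U).symm.injective)⟩
  naturality U V f := by
    apply Subtype.ext
    funext x
    obtain ⟨p, rfl⟩ := (toU_surjective hθ U) x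
    show toU θ' V (mapSigma g V ((PhiE hθ V).symm ((θ.map f).1 (toU θ U p))))
      = (θ'.map f).1 (toU θ' U (mapSigma g U ((PhiE hθ U).symm (toU θ U p))))
    rw [map_toU θ f p, map_toU θ' f]
    have e1 : (PhiE hθ V).symm (toU θ V ⟨⟨p.1.1, mem_of_le (leOfHom f) p.1.2⟩, p.2⟩)
        = ⟨⟨p.1.1, mem_of_le (leOfHom f) p.1.2⟩, p.2⟩ := Equiv.symm_apply_apply _ _
    have e2 : (PhiE hθ U).symm (toU θ U p) = p := Equiv.symm_apply_apply _ _
    rw [e1, e2]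
    rfl

end SDAux

namespace SDAux

variable {σ : Type} [DecidableEq σ]

abbrev SigT (f : σ → IInj) (U : Finset σ) := Σ s : {x // x ∈ U}, Fin (f s.1).n

noncomputable def eqv (f : σ → IInj) (U : Finset σ) :
    SigT f U ≃ Fin (Fintype.card (SigT f U)) := Fintype.equivFin _

def inclSigma (f : σ → IInj) {U V : Finset σ} (h : U ≤ V) (p : SigT f U) : SigT f V :=
  ⟨⟨p.1.1, mem_of_le h p.1.2⟩, p.2⟩

lemma inclSigma_injective (f : σ → IInj) {U V : Finset σ} (h : U ≤ V) :
    Function.Injective (inclSigma f h) := by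
  rintro ⟨⟨s, hs⟩, y⟩ ⟨⟨t, ht⟩, z⟩ hq
  rw [Sigma.ext_iff] at hq
  obtain ⟨h1, h2⟩ := hq
  obtain rfl : s = t := congrArg Subtype.val h1
  obtain rfl : y = z := eq_of_heq h2
  rfl

noncomputable def Dobj (f : σ → IInj) : Finset σ ⥤ IInj where
  obj U := ⟨Fintype.card (SigT f U)⟩
  map {U V} h := ⟨fun x => eqv f V (inclSigma f (leOfHom h) ((eqv f U).symm x)),
    (eqv f V).injective.comp ((inclSigma_injective f _).comp (eqv f U).symm.injective)⟩
  map_id U := by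
    apply Subtype.ext
    funext x
    show eqv f U (inclSigma f (le_refl U) ((eqv f U).symm x)) = x
    have h1 : inclSigma f (le_refl U) ((eqv f U).symm x) = (eqv f U).symm x := rfl
    rw [h1, Equiv.apply_symm_apply]
  map_comp {U V W} h h' := by
    apply Subtype.ext
    funext x
    show eqv f W (inclSigma f (leOfHom (h ≫ h')) ((eqv f U).symm x))
      = eqv f W (inclSigma f (leOfHom h')
          ((eqv f V).symm (eqv f V (inclSigma f (leOfHom h) ((eqv f U).symm x)))))
    rw [Equiv.symm_apply_apply]
    rfl

lemma isSumDiagram_Dobj (f : σ → IInj) : IsSumDiagram (Dobj f) := by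
  intro U V hUV
  constructor
  · rintro (x | x) (y | y) h
    · have hx : x = y := ((Dobj f).map (homOfLE (le_sup_left : U ≤ U ⊔ V))).2 h
      rw [hx]
    · exfalso
      have h' : eqv f (U ⊔ V) (inclSigma f le_sup_left ((eqv f U).symm x))
          = eqv f (U ⊔ V) (inclSigma f le_sup_right ((eqv f V).symm y)) := h
      have he := (eqv f (U ⊔ V)).injective h'
      have ha : ((eqv f U).symm x).1.1 = ((eqv f V).symm y).1.1 :=
        congrArg (fun r => r.1.1) he
      refine Finset.disjoint_left.mp hUV ((eqv f U).symm x).1.2 ?_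
      rw [ha]
      exact ((eqv f V).symm y).1.2
    · exfalso
      have h' : eqv f (U ⊔ V) (inclSigma f le_sup_right ((eqv f V).symm x))
          = eqv f (U ⊔ V) (inclSigma f le_sup_left ((eqv f U).symm y)) := h
      have he := (eqv f (U ⊔ V)).injective h'
      have ha : ((eqv f V).symm x).1.1 = ((eqv f U).symm y).1.1 :=
        congrArg (fun r => r.1.1) he
      refine Finset.disjoint_left.mp hUV ((eqv f U).symm y).1.2 ?_
      rw [← ha]
      exact ((eqv f V).symm x).1.2
    · have hx : x = y := ((Dobj f).map (homOfLE (le_sup_right : V ≤ U ⊔ V))).2 h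
      rw [hx]
  · intro x
    have hmem : ((eqv f (U ⊔ V)).symm x).1.1 ∈ U ∪ V := by
      have hsub : U ⊔ V ⊆ U ∪ V := by rw [Finset.sup_eq_union]
      exact hsub ((eqv f (U ⊔ V)).symm x).1.2
    rcases Finset.mem_union.mp hmem with hm | hm
    · refine ⟨Sum.inl (eqv f U ⟨⟨((eqv f (U ⊔ V)).symm x).1.1, hm⟩, ((eqv f (U ⊔ V)).symm x).2⟩), ?_⟩
      show eqv f (U ⊔ V) (inclSigma f le_sup_left ((eqv f U).symm (eqv f U _))) = x
      rw [Equiv.symm_apply_apply]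
      have h1 : inclSigma f (le_sup_left : U ≤ U ⊔ V)
          ⟨⟨((eqv f (U ⊔ V)).symm x).1.1, hm⟩, ((eqv f (U ⊔ V)).symm x).2⟩
          = (eqv f (U ⊔ V)).symm x := rfl
      rw [h1]
      exact (eqv f (U ⊔ V)).apply_symm_apply x
    · refine ⟨Sum.inr (eqv f V ⟨⟨((eqv f (U ⊔ V)).symm x).1.1, hm⟩, ((eqv f (U ⊔ V)).symm x).2⟩), ?_⟩
      show eqv f (U ⊔ V) (inclSigma f le_sup_right ((eqv f V).symm (eqv f V _))) = x
      rw [Equiv.symm_apply_apply]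
      have h1 : inclSigma f (le_sup_right : V ≤ U ⊔ V)
          ⟨⟨((eqv f (U ⊔ V)).symm x).1.1, hm⟩, ((eqv f (U ⊔ V)).symm x).2⟩
          = (eqv f (U ⊔ V)).symm x := rfl
      rw [h1]
      exact (eqv f (U ⊔ V)).apply_symm_apply x

lemma card_singleton (f : σ → IInj) (s : σ) :
    Fintype.card (SigT f {s}) = (f s).n := by
  rw [Fintype.card_sigma]
  simp

end SDAux

/-- **Restriction to singletons is an equivalence.**  For a finite pointed set `S` with
non-basepoint part `S̄` (here an arbitrary finite type `σ`), the restriction functor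
`π_S : 𝓓(S) → 𝓘^{S̄}` is an equivalence of categories. -/
theorem units_traces_sum_diagrams_equivalence (σ : Type) [Fintype σ] [DecidableEq σ] :
    (piS σ).IsEquivalence := by
  refine { faithful := ?_, full := ?_, essSurj := ?_ }
  · refine ⟨fun {θ θ'} {η η'} h => ?_⟩
    apply ObjectProperty.hom_ext
    apply NatTrans.ext
    funext U
    apply Subtype.ext
    funext x
    obtain ⟨⟨⟨s, hs⟩, y⟩, rfl⟩ := SDAux.toU_surjective θ.property U x
    have hs' : η.hom.app {s} = η'.hom.app {s} := congrFun h s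
    have n1 : (η.hom.app U).1 ((θ.obj.map (SDAux.incl hs)).1 y)
        = (θ'.obj.map (SDAux.incl hs)).1 ((η.hom.app {s}).1 y) :=
      congrFun (congrArg Subtype.val (η.hom.naturality (SDAux.incl hs))) y
    have n2 : (η'.hom.app U).1 ((θ.obj.map (SDAux.incl hs)).1 y)
        = (θ'.obj.map (SDAux.incl hs)).1 ((η'.hom.app {s}).1 y) :=
      congrFun (congrArg Subtype.val (η'.hom.naturality (SDAux.incl hs))) y
    show (η.hom.app U).1 ((θ.obj.map (SDAux.incl hs)).1 y)
      = (η'.hom.app U).1 ((θ.obj.map (SDAux.incl hs)).1 y)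
    rw [n1, n2, hs']
  · refine ⟨fun {θ θ'} g => ?_⟩
    refine ⟨ObjectProperty.homMk (SDAux.extendNat θ.property θ'.property g), ?_⟩
    funext s
    apply Subtype.ext
    funext x
    show SDAux.toU θ'.obj {s}
        (SDAux.mapSigma g {s} ((SDAux.PhiE θ.property {s}).symm x)) = (g s).1 x
    erw [SDAux.symm_singleton]
    exact SDAux.toU_singleton θ'.obj _ _
  · refine ⟨fun f => ?_⟩
    refine ⟨⟨SDAux.Dobj f, SDAux.isSumDiagram_Dobj f⟩, ⟨eqToIso ?_⟩⟩
    funext s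
    show (⟨Fintype.card (SDAux.SigT f {s})⟩ : IInj) = f s
    rw [SDAux.card_singleton]
end

section
/- In the setting of the previous context, for every object a ∈ 𝓘^{S̄}, the comma category (a ↓ π_S) of objects of 𝓓(S) under a has an initial object, and is therefore a connected (indeed contractible) category. -/
open CategoryTheory

section Aux

variable {σ : Type} [DecidableEq σ]

/-- Structure maps of a sum diagram out of disjoint subsets have disjoint images. -/
theorem sd_disj (ψ : Finset σ ⥤ IInj) (hψ : IsSumDiagram ψ) {U V W : Finset σ}
    (hU : U ≤ W) (hV : V ≤ W) (hd : Disjoint U V) (x : Fin (ψ.obj U).n)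
    (y : Fin (ψ.obj V).n) : (ψ.map (homOfLE hU)).1 x ≠ (ψ.map (homOfLE hV)).1 y := by
  have hUV : U ⊔ V ≤ W := sup_le hU hV
  have e1 : (homOfLE hU : U ⟶ W) =
      (homOfLE (le_sup_left : U ≤ U ⊔ V)) ≫ homOfLE hUV := Subsingleton.elim _ _
  have e2 : (homOfLE hV : V ⟶ W) =
      (homOfLE (le_sup_right : V ≤ U ⊔ V)) ≫ homOfLE hUV := Subsingleton.elim _ _
  rw [e1, e2, ψ.map_comp, ψ.map_comp]
  intro hcon
  have h5 : (ψ.map (homOfLE (le_sup_left : U ≤ U ⊔ V))).1 x =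
      (ψ.map (homOfLE (le_sup_right : V ≤ U ⊔ V))).1 y :=
    (ψ.map (homOfLE hUV)).2 hcon
  simpa using (hψ U V hd).1 (a₁ := Sum.inl x) (a₂ := Sum.inr y) h5

variable (a : σ → IInj)

/-- The cardinality of the free sum diagram at `U`. -/
def Nfree (U : Finset σ) : ℕ := ∑ s ∈ U, (a s).n

/-- The sigma-type model of the free sum diagram at `U`. -/
abbrev SigT (U : Finset σ) := Σ s : {x // x ∈ U}, Fin (a s.1).n

noncomputable def eFree (U : Finset σ) : SigT a U ≃ Fin (Nfree a U) :=
  Fintype.equivFinOfCardEq (by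
    rw [Fintype.card_sigma]
    simp only [Fintype.card_fin, Nfree]
    exact Finset.sum_attach U fun s => (a s).n)

def incSig {U V : Finset σ} (h : U ≤ V) : SigT a U → SigT a V :=
  fun p => ⟨⟨p.1.1, h p.1.2⟩, p.2⟩

theorem incSig_inj {U V : Finset σ} (h : U ≤ V) : Function.Injective (incSig a h) := by
  rintro ⟨⟨s, hs⟩, x⟩ ⟨⟨t, ht⟩, y⟩ hxy
  simp only [incSig] at hxy
  injection hxy with h1 h2
  injection h1 with h1'
  subst h1'
  rw [eq_of_heq h2]

/-- The free sum diagram on the family `a`. -/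
noncomputable def freeDiag : Finset σ ⥤ IInj where
  obj U := ⟨Nfree a U⟩
  map {U V} h := ⟨fun x => eFree a V (incSig a (leOfHom h) ((eFree a U).symm x)),
    fun x y hxy => by
      have := incSig_inj a (leOfHom h) ((eFree a V).injective hxy)
      simpa using (eFree a U).symm.injective this⟩
  map_id U := by
    apply Subtype.ext
    funext x
    have h0 : incSig a (le_refl U) ((eFree a U).symm x) = (eFree a U).symm x := rfl
    simp only [h0]
    simp
    rfl
  map_comp {U V W} f g := by
    apply Subtype.ext
    funext x
    show eFree a W (incSig a (leOfHom (f ≫ g)) ((eFree a U).symm x))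
        = eFree a W (incSig a (leOfHom g)
            ((eFree a V).symm (eFree a V (incSig a (leOfHom f) ((eFree a U).symm x)))))
    rw [Equiv.symm_apply_apply]
    rfl

theorem freeDiag_isSumDiagram : IsSumDiagram (freeDiag a) := by
  intro U V hd
  constructor
  · rintro (x | x) (y | y) hxy
    · exact congrArg Sum.inl (((freeDiag a).map (homOfLE (le_sup_left : U ≤ U ⊔ V))).2 hxy)
    · exfalso
      simp only [Sum.elim_inl, Sum.elim_inr] at hxy
      have h1 : incSig a (le_sup_left : U ≤ U ⊔ V) ((eFree a U).symm x)
          = incSig a (le_sup_right : V ≤ U ⊔ V) ((eFree a V).symm y) :=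
        (eFree a (U ⊔ V)).injective hxy
      have h2 : ((((eFree a U).symm x).1 : σ)) = ((((eFree a V).symm y).1 : σ)) :=
        congrArg (fun z => (z.1 : σ)) h1
      have h3 : ((((eFree a U).symm x).1 : σ)) ∈ V := by
        rw [h2]; exact ((eFree a V).symm y).1.2
      exact Finset.disjoint_left.mp hd ((eFree a U).symm x).1.2 h3
    · exfalso
      simp only [Sum.elim_inl, Sum.elim_inr] at hxy
      have h1 : incSig a (le_sup_right : V ≤ U ⊔ V) ((eFree a V).symm x)
          = incSig a (le_sup_left : U ≤ U ⊔ V) ((eFree a U).symm y) :=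
        (eFree a (U ⊔ V)).injective hxy
      have h2 : ((((eFree a V).symm x).1 : σ)) = ((((eFree a U).symm y).1 : σ)) :=
        congrArg (fun z => (z.1 : σ)) h1
      have h3 : ((((eFree a V).symm x).1 : σ)) ∈ U := by
        rw [h2]; exact ((eFree a U).symm y).1.2
      exact Finset.disjoint_left.mp hd h3 ((eFree a V).symm x).1.2
    · exact congrArg Sum.inr (((freeDiag a).map (homOfLE (le_sup_right : V ≤ U ⊔ V))).2 hxy)
  · intro z
    obtain ⟨q, rfl⟩ := (eFree a (U ⊔ V)).surjective z
    obtain ⟨⟨s, hs⟩, x⟩ := q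
    have hs' : s ∈ U ∪ V := by rwa [← Finset.sup_eq_union]
    rcases Finset.mem_union.mp hs' with h | h
    · refine ⟨Sum.inl (eFree a U ⟨⟨s, h⟩, x⟩), ?_⟩
      show eFree a (U ⊔ V) (incSig a _ ((eFree a U).symm (eFree a U ⟨⟨s, h⟩, x⟩))) = _
      simp only [Equiv.symm_apply_apply]
      all_goals rfl
    · refine ⟨Sum.inr (eFree a V ⟨⟨s, h⟩, x⟩), ?_⟩
      show eFree a (U ⊔ V) (incSig a _ ((eFree a V).symm (eFree a V ⟨⟨s, h⟩, x⟩))) = _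
      simp only [Equiv.symm_apply_apply]
      all_goals rfl

theorem sing_le {U : Finset σ} (s : {x // x ∈ U}) : ({s.1} : Finset σ) ≤ U :=
  Finset.singleton_subset_iff.mpr s.2

/-- The canonical comparison map out of the free sum diagram, on sigma elements. -/
noncomputable def canSig (ψ : Finset σ ⥤ IInj) (f : ∀ s : σ, a s ⟶ ψ.obj {s})
    (U : Finset σ) : SigT a U → Fin (ψ.obj U).n := fun p =>
  (ψ.map (homOfLE (sing_le p.1))).1 ((f (p.1 : σ)).1 p.2)

/-- The canonical comparison map out of the free sum diagram, componentwise. -/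
noncomputable def canApp (ψ : Finset σ ⥤ IInj) (f : ∀ s : σ, a s ⟶ ψ.obj {s})
    (U : Finset σ) : Fin (Nfree a U) → Fin (ψ.obj U).n := fun y =>
  canSig a ψ f U ((eFree a U).symm y)

theorem canApp_eval (ψ : Finset σ ⥤ IInj) (f : ∀ s : σ, a s ⟶ ψ.obj {s})
    {U : Finset σ} (p : SigT a U) :
    canApp a ψ f U (eFree a U p) =
      (ψ.map (homOfLE (sing_le p.1))).1 ((f (p.1 : σ)).1 p.2) :=
  congrArg (canSig a ψ f U) (Equiv.symm_apply_apply _ _)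

theorem canApp_sig_inj (ψ : Finset σ ⥤ IInj) (hψ : IsSumDiagram ψ)
    (f : ∀ s : σ, a s ⟶ ψ.obj {s}) (U : Finset σ) :
    ∀ p q : SigT a U,
      (ψ.map (homOfLE (sing_le p.1))).1 ((f (p.1 : σ)).1 p.2) =
        (ψ.map (homOfLE (sing_le q.1))).1 ((f (q.1 : σ)).1 q.2) → p = q := by
  rintro ⟨⟨s, hs⟩, xp⟩ ⟨⟨t, ht⟩, xq⟩ h
  by_cases hst : s = t
  · subst hst
    have h2 : (f s).1 xp = (f s).1 xq :=
      (ψ.map (homOfLE (sing_le (⟨s, hs⟩ : {x // x ∈ U})))).2 h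
    have h3 : xp = xq := (f s).2 h2
    subst h3
    rfl
  · have hd : Disjoint ({s} : Finset σ) {t} := by
      rw [Finset.disjoint_left]
      intro b hb hb'
      rw [Finset.mem_singleton] at hb hb'
      subst hb
      exact hst hb'
    exact absurd h (sd_disj ψ hψ (sing_le (⟨s, hs⟩ : {x // x ∈ U}))
      (sing_le (⟨t, ht⟩ : {x // x ∈ U})) hd _ _)

theorem canApp_inj (ψ : Finset σ ⥤ IInj) (hψ : IsSumDiagram ψ)
    (f : ∀ s : σ, a s ⟶ ψ.obj {s}) (U : Finset σ) :
    Function.Injective (canApp a ψ f U) := by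
  intro y z h
  exact (eFree a U).symm.injective (canApp_sig_inj a ψ hψ f U _ _ h)

theorem canApp_nat (ψ : Finset σ ⥤ IInj) (f : ∀ s : σ, a s ⟶ ψ.obj {s})
    {U V : Finset σ} (h : U ≤ V) (y : Fin (Nfree a U)) :
    (ψ.map (homOfLE h)).1 (canApp a ψ f U y) =
      canApp a ψ f V (((freeDiag a).map (homOfLE h)).1 y) := by
  obtain ⟨p, rfl⟩ := (eFree a U).surjective y
  have e1 : ((freeDiag a).map (homOfLE h)).1 (eFree a U p) = eFree a V (incSig a h p) := by
    show eFree a V (incSig a _ ((eFree a U).symm (eFree a U p))) = _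
    rw [Equiv.symm_apply_apply]
  rw [e1, canApp_eval, canApp_eval]
  have e2 : (homOfLE (sing_le p.1) : ({(p.1 : σ)} : Finset σ) ⟶ U) ≫ homOfLE h
      = homOfLE (sing_le (incSig a h p).1) := Subsingleton.elim _ _
  exact (congrArg (fun g => g.1 ((f (p.1 : σ)).1 p.2)) (ψ.map_comp (homOfLE (sing_le p.1)) (homOfLE h))).symm

/-- The canonical natural transformation out of the free sum diagram. -/
noncomputable def canNat (ψ : Finset σ ⥤ IInj) (hψ : IsSumDiagram ψ)
    (f : ∀ s : σ, a s ⟶ ψ.obj {s}) : freeDiag a ⟶ ψ where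
  app U := ⟨canApp a ψ f U, canApp_inj a ψ hψ f U⟩
  naturality {U V} h := by
    apply Subtype.ext
    funext y
    exact (canApp_nat a ψ f (leOfHom h) y).symm

/-- The unit morphism `a ⟶ π_S(freeDiag a)`. -/
noncomputable def unitHom : a ⟶ (piS σ).obj ⟨freeDiag a, freeDiag_isSumDiagram a⟩ :=
  fun s => ⟨fun x => eFree a {s} ⟨⟨s, Finset.mem_singleton_self s⟩, x⟩, by
    intro x y h
    have h1 := (eFree a {s}).injective h
    injection h1 with h2 h3
    all_goals exact eq_of_heq h3⟩

end Aux

/-- **The comma category `(a ↓ π_S)` has an initial object and is connected.**  For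
every object `a ∈ 𝓘^{S̄}`, the comma category `(a ↓ π_S)` of objects of `𝓓(S)` under
`a` has an initial object, and is therefore a connected (indeed contractible)
category. -/
theorem units_traces_comma_category_initial (σ : Type) [Fintype σ] [DecidableEq σ]
    (a : σ → IInj) :
    (∃ x : StructuredArrow a (piS σ), Nonempty (Limits.IsInitial x)) ∧
      IsConnected (StructuredArrow a (piS σ)) := by
  classical
  let X : StructuredArrow a (piS σ) := StructuredArrow.mk (unitHom a)
  have hinit : Limits.IsInitial X := by
    refine Limits.IsInitial.ofUniqueHom
      (fun Y => StructuredArrow.homMk (ObjectProperty.homMk (canNat a Y.right.obj Y.right.property Y.hom)) ?_)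
      (fun Y m => ?_)
    · -- the triangle commutes
      funext s
      apply Subtype.ext
      funext x
      show canApp a Y.right.obj Y.hom {s}
          (eFree a {s} ⟨⟨s, Finset.mem_singleton_self s⟩, x⟩) = (Y.hom s).1 x
      refine (canApp_eval a Y.right.obj Y.hom _).trans ?_
      have h4 : (homOfLE (sing_le (⟨s, Finset.mem_singleton_self s⟩ :
          {x // x ∈ ({s} : Finset σ)}))) = 𝟙 ({s} : Finset σ) := Subsingleton.elim _ _
      rw [h4, Y.right.obj.map_id]
      rfl
    · -- uniqueness
      apply StructuredArrow.hom_ext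
      apply ObjectProperty.hom_ext
      apply NatTrans.ext
      funext U
      apply Subtype.ext
      funext y
      obtain ⟨q, rfl⟩ := (eFree a U).surjective y
      obtain ⟨⟨s, hs⟩, x⟩ := q
      show (m.right.hom.app U).1 (eFree a U ⟨⟨s, hs⟩, x⟩)
          = canApp a Y.right.obj Y.hom U (eFree a U ⟨⟨s, hs⟩, x⟩)
      refine Eq.trans ?_ (canApp_eval a Y.right.obj Y.hom _).symm
      have e1 : ((freeDiag a).map (homOfLE (sing_le (⟨s, hs⟩ : {x // x ∈ U})))).1
          ((unitHom a s).1 x) = eFree a U ⟨⟨s, hs⟩, x⟩ := by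
        show eFree a U (incSig a _ ((eFree a {s}).symm
            (eFree a {s} ⟨⟨s, Finset.mem_singleton_self s⟩, x⟩))) = _
        simp only [Equiv.symm_apply_apply]
        all_goals rfl
      rw [← e1]
      have e2 : (m.right.hom.app U).1
          (((freeDiag a).map (homOfLE (sing_le (⟨s, hs⟩ : {x // x ∈ U})))).1
            ((unitHom a s).1 x))
          = (Y.right.obj.map (homOfLE (sing_le (⟨s, hs⟩ : {x // x ∈ U})))).1
            ((m.right.hom.app ({s} : Finset σ)).1 ((unitHom a s).1 x)) :=
        congrFun (congrArg Subtype.val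
          (m.right.hom.naturality (homOfLE (sing_le (⟨s, hs⟩ : {x // x ∈ U})))))
          ((unitHom a s).1 x)
      rw [e2]
      have e3 : (m.right.hom.app ({s} : Finset σ)).1 ((unitHom a s).1 x) = (Y.hom s).1 x :=
        congrFun (congrArg Subtype.val (congrFun (StructuredArrow.w m) s)) x
      rw [e3]
  refine ⟨⟨X, ⟨hinit⟩⟩, ?_⟩
  apply IsConnected.of_induct (j₀ := X)
  intro p hX hcl j
  exact (hcl (hinit.to j)).mp hX
end

section
/- Let X be a based set and define the Barratt–Eccles relation on ⨿_{n≥0} Σ_n^{k+1} × X^n generated by (e, α_*(x)) ∼ (α^*(e), x) for every injection α : Fin m → Fin n, where α_* : X^m → X^n extends by the basepoint and α^* : Σ_n^{k+1} → Σ_m^{k+1} is the induced restriction of permutations. Then block sum of permutations induces a well-defined associative and unital multiplication on the quotient, i.e. [σ, x]·[σ', x'] = [σ ⊕ σ', (x,x')] is independent of representatives and makes the quotient a monoid. -/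
open Equiv

/-- For an injection `α : Fin m → Fin n` and a permutation `σ` of `Fin n`, the
permutation `α^*(σ)` of `Fin m` determined by the unique factorization
`σ ∘ α = β ∘ α^*(σ)` with `β` order-preserving injective: `α^*(σ) i` is the rank of
`σ (α i)` in the image of `σ ∘ α`. -/
noncomputable def permRestrict {m n : ℕ} (α : Fin m → Fin n) (hα : Function.Injective α)
    (σ : Equiv.Perm (Fin n)) : Equiv.Perm (Fin m) :=
  Equiv.ofBijective
    (fun i =>
      (Finset.orderIsoOfFin (Finset.univ.image (σ ∘ α))
          (by rw [Finset.card_image_of_injective _ (σ.injective.comp hα),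
                Finset.card_univ, Fintype.card_fin])).symm
        ⟨σ (α i), Finset.mem_image_of_mem _ (Finset.mem_univ i)⟩)
    (Finite.injective_iff_bijective.mp (by
      intro a b hab
      have h := congrArg Subtype.val
        (((Finset.orderIsoOfFin _ _).symm.injective hab))
      exact hα (σ.injective h)))

/-- Extension by the basepoint: `α_*(x)_j = x_i` if `α i = j`, and the basepoint
otherwise. -/
noncomputable def extendByBase {X : Type} (x₀ : X) {m n : ℕ} (α : Fin m → Fin n)
    (x : Fin m → X) : Fin n → X := fun j =>
  if h : ∃ i, α i = j then x h.choose else x₀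

/-- The block-sum permutation `σ ⊕ σ'` of `Fin (n + n')`. -/
def blockSumPerm {n n' : ℕ} (σ : Equiv.Perm (Fin n)) (σ' : Equiv.Perm (Fin n')) :
    Equiv.Perm (Fin (n + n')) :=
  finSumFinEquiv.permCongr (Equiv.sumCongr σ σ')

/-- Elements of degree `k` of the Barratt–Eccles construction on a based set `X`,
before dividing out the relation: triples `(n, (σ₀,…,σ_k), (x₁,…,x_n))`. -/
def BEPre (X : Type) (k : ℕ) : Type :=
  Σ n : ℕ, (Fin (k + 1) → Equiv.Perm (Fin n)) × (Fin n → X)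

/-- The Barratt–Eccles relation, generated by `(e, α_*(x)) ∼ (α^*(e), x)` for every
injection `α : Fin m → Fin n`. -/
def BERel (X : Type) (x₀ : X) (k : ℕ) : BEPre X k → BEPre X k → Prop :=
  fun a b =>
    ∃ (m n : ℕ) (α : Fin m → Fin n) (hα : Function.Injective α)
      (e : Fin (k + 1) → Equiv.Perm (Fin n)) (x : Fin m → X),
      a = ⟨n, e, extendByBase x₀ α x⟩ ∧
        b = ⟨m, fun t => permRestrict α hα (e t), x⟩

/-- Degree `k` of the Barratt–Eccles construction on the based set `(X, x₀)`. -/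
def BE (X : Type) (x₀ : X) (k : ℕ) : Type := Quot (BERel X x₀ k)

lemma permRestrict_lt_iff {m n : ℕ} (α : Fin m → Fin n) (hα : Function.Injective α)
    (σ : Equiv.Perm (Fin n)) (i i' : Fin m) :
    permRestrict α hα σ i < permRestrict α hα σ i' ↔ σ (α i) < σ (α i') := by
  simp only [permRestrict, Equiv.ofBijective_apply]
  rw [OrderIso.lt_iff_lt]
  exact Subtype.mk_lt_mk

lemma permRestrict_eq_of {m n : ℕ} (α : Fin m → Fin n) (hα : Function.Injective α)
    (σ : Equiv.Perm (Fin n)) (τ : Equiv.Perm (Fin m))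
    (h : ∀ i i', τ i < τ i' ↔ σ (α i) < σ (α i')) :
    permRestrict α hα σ = τ := by
  set ρ := permRestrict α hα σ with hρ
  have hf : StrictMono (fun a => ρ (τ.symm a)) := by
    intro a b hab
    rw [hρ, permRestrict_lt_iff, ← h, τ.apply_symm_apply, τ.apply_symm_apply]
    exact hab
  have hrange : Set.range (fun a => ρ (τ.symm a)) = Set.range (id : Fin m → Fin m) := by
    rw [Set.range_id]
    exact Set.range_eq_univ.mpr (ρ.surjective.comp τ.symm.surjective)
  haveI : WellFoundedLT (Fin m) := inferInstance
  have hid := ((StrictMono.range_inj (f := fun a => ρ (τ.symm a)) (g := id) hf strictMono_id)).1 hrange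
  refine Equiv.ext fun i => ?_
  simpa using congrFun hid (τ i)

@[simp] lemma blockSumPerm_castAdd {n n' : ℕ} (σ : Equiv.Perm (Fin n))
    (σ' : Equiv.Perm (Fin n')) (i : Fin n) :
    blockSumPerm σ σ' (Fin.castAdd n' i) = Fin.castAdd n' (σ i) := by
  simp [blockSumPerm, Equiv.permCongr_apply, finSumFinEquiv_symm_apply_castAdd,
    finSumFinEquiv_apply_left]

@[simp] lemma blockSumPerm_natAdd {n n' : ℕ} (σ : Equiv.Perm (Fin n))
    (σ' : Equiv.Perm (Fin n')) (i : Fin n') :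
    blockSumPerm σ σ' (Fin.natAdd n i) = Fin.natAdd n (σ' i) := by
  simp [blockSumPerm, Equiv.permCongr_apply, finSumFinEquiv_symm_apply_natAdd,
    finSumFinEquiv_apply_right]

def sumMapLeft {m n : ℕ} (α : Fin m → Fin n) (n' : ℕ) : Fin (m + n') → Fin (n + n') :=
  fun i => finSumFinEquiv (Sum.map α id (finSumFinEquiv.symm i))

def sumMapRight {m n : ℕ} (n' : ℕ) (α : Fin m → Fin n) : Fin (n' + m) → Fin (n' + n) :=
  fun i => finSumFinEquiv (Sum.map id α (finSumFinEquiv.symm i))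

lemma sumMapLeft_injective {m n n' : ℕ} {α : Fin m → Fin n} (hα : Function.Injective α) :
    Function.Injective (sumMapLeft α n') :=
  finSumFinEquiv.injective.comp ((hα.sumMap Function.injective_id).comp
    finSumFinEquiv.symm.injective)

lemma sumMapRight_injective {m n n' : ℕ} {α : Fin m → Fin n} (hα : Function.Injective α) :
    Function.Injective (sumMapRight n' α) :=
  finSumFinEquiv.injective.comp ((Function.injective_id.sumMap hα).comp
    finSumFinEquiv.symm.injective)

@[simp] lemma sumMapLeft_castAdd {m n n' : ℕ} (α : Fin m → Fin n) (i : Fin m) :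
    sumMapLeft α n' (Fin.castAdd n' i) = Fin.castAdd n' (α i) := by
  simp [sumMapLeft]

@[simp] lemma sumMapLeft_natAdd {m n n' : ℕ} (α : Fin m → Fin n) (i : Fin n') :
    sumMapLeft α n' (Fin.natAdd m i) = Fin.natAdd n i := by
  simp [sumMapLeft]

@[simp] lemma sumMapRight_castAdd {m n n' : ℕ} (α : Fin m → Fin n) (i : Fin n') :
    sumMapRight n' α (Fin.castAdd m i) = Fin.castAdd n i := by
  simp [sumMapRight]

@[simp] lemma sumMapRight_natAdd {m n n' : ℕ} (α : Fin m → Fin n) (i : Fin m) :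
    sumMapRight n' α (Fin.natAdd n' i) = Fin.natAdd n' (α i) := by
  simp [sumMapRight]

lemma castAdd_lt_natAdd {n n' : ℕ} (a : Fin n) (b : Fin n') :
    Fin.castAdd n' a < Fin.natAdd n b := by
  simp only [Fin.lt_def, Fin.coe_castAdd, Fin.coe_natAdd]
  omega

lemma permRestrict_blockSum_left {m n n' : ℕ} (α : Fin m → Fin n)
    (hα : Function.Injective α) (σ : Equiv.Perm (Fin n)) (σ' : Equiv.Perm (Fin n')) :
    permRestrict (sumMapLeft α n') (sumMapLeft_injective hα) (blockSumPerm σ σ') =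
      blockSumPerm (permRestrict α hα σ) σ' := by
  apply permRestrict_eq_of
  intro i i'
  refine Fin.addCases (fun a => ?_) (fun b => ?_) i <;>
    refine Fin.addCases (fun a' => ?_) (fun b' => ?_) i' <;>
      simp only [blockSumPerm_castAdd, blockSumPerm_natAdd, sumMapLeft_castAdd,
        sumMapLeft_natAdd, Fin.lt_def, Fin.coe_castAdd, Fin.coe_natAdd]
  · rw [← Fin.lt_def, ← Fin.lt_def, permRestrict_lt_iff]
  · constructor <;> intro _ <;> [skip; skip] <;> omega
  · omega
  · omega

lemma permRestrict_blockSum_right {m n n' : ℕ} (α : Fin m → Fin n)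
    (hα : Function.Injective α) (σ' : Equiv.Perm (Fin n')) (σ : Equiv.Perm (Fin n)) :
    permRestrict (sumMapRight n' α) (sumMapRight_injective hα) (blockSumPerm σ' σ) =
      blockSumPerm σ' (permRestrict α hα σ) := by
  apply permRestrict_eq_of
  intro i i'
  refine Fin.addCases (fun a => ?_) (fun b => ?_) i <;>
    refine Fin.addCases (fun a' => ?_) (fun b' => ?_) i' <;>
      simp only [blockSumPerm_castAdd, blockSumPerm_natAdd, sumMapRight_castAdd,
        sumMapRight_natAdd, Fin.lt_def, Fin.coe_castAdd, Fin.coe_natAdd]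
  · omega
  · omega
  · rw [Nat.add_lt_add_iff_left, Nat.add_lt_add_iff_left, ← Fin.lt_def, ← Fin.lt_def,
      permRestrict_lt_iff]

lemma extendByBase_apply_eq {X : Type} (x₀ : X) {m n : ℕ} {α : Fin m → Fin n}
    (hα : Function.Injective α) (x : Fin m → X) {i : Fin m} {j : Fin n} (hij : α i = j) :
    extendByBase x₀ α x j = x i := by
  have h : ∃ i, α i = j := ⟨i, hij⟩
  rw [extendByBase, dif_pos h]
  exact congrArg x (hα (h.choose_spec.trans hij.symm))

lemma extendByBase_apply_ne {X : Type} (x₀ : X) {m n : ℕ} {α : Fin m → Fin n}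
    (x : Fin m → X) {j : Fin n} (h : ¬∃ i, α i = j) :
    extendByBase x₀ α x j = x₀ := dif_neg h

lemma extendByBase_sumMapLeft {X : Type} (x₀ : X) {m n n' : ℕ} {α : Fin m → Fin n}
    (hα : Function.Injective α) (x : Fin m → X) (x' : Fin n' → X) :
    extendByBase x₀ (sumMapLeft α n') (Fin.append x x') =
      Fin.append (extendByBase x₀ α x) x' := by
  funext j
  have hαL := sumMapLeft_injective (n' := n') hα
  refine Fin.addCases (fun a => ?_) (fun b => ?_) j
  · rw [Fin.append_left]
    by_cases hc : ∃ c, α c = a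
    · obtain ⟨c, hc⟩ := hc
      rw [extendByBase_apply_eq x₀ hα x hc,
        extendByBase_apply_eq x₀ hαL (Fin.append x x')
          (i := Fin.castAdd n' c) (by rw [sumMapLeft_castAdd, hc]),
        Fin.append_left]
    · rw [extendByBase_apply_ne x₀ x hc, extendByBase_apply_ne]
      rintro ⟨i, hi⟩
      refine Fin.addCases (fun c hi => ?_) (fun b hi => ?_) i hi
      · rw [sumMapLeft_castAdd] at hi
        exact hc ⟨c, Fin.castAdd_injective _ n' hi⟩
      · rw [sumMapLeft_natAdd] at hi
        have := congrArg Fin.val hi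
        simp only [Fin.coe_natAdd, Fin.coe_castAdd] at this
        omega
  · rw [Fin.append_right,
      extendByBase_apply_eq x₀ hαL (Fin.append x x')
        (i := Fin.natAdd m b) (sumMapLeft_natAdd α b),
      Fin.append_right]

lemma extendByBase_sumMapRight {X : Type} (x₀ : X) {m n n' : ℕ} {α : Fin m → Fin n}
    (hα : Function.Injective α) (x : Fin m → X) (x' : Fin n' → X) :
    extendByBase x₀ (sumMapRight n' α) (Fin.append x' x) =
      Fin.append x' (extendByBase x₀ α x) := by
  funext j
  have hαR := sumMapRight_injective (n' := n') hα
  refine Fin.addCases (fun a => ?_) (fun b => ?_) j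
  · rw [Fin.append_left,
      extendByBase_apply_eq x₀ hαR (Fin.append x' x)
        (i := Fin.castAdd m a) (sumMapRight_castAdd α a),
      Fin.append_left]
  · rw [Fin.append_right]
    by_cases hc : ∃ c, α c = b
    · obtain ⟨c, hc⟩ := hc
      rw [extendByBase_apply_eq x₀ hα x hc,
        extendByBase_apply_eq x₀ hαR (Fin.append x' x)
          (i := Fin.natAdd n' c) (by rw [sumMapRight_natAdd, hc]),
        Fin.append_right]
    · rw [extendByBase_apply_ne x₀ x hc, extendByBase_apply_ne]
      rintro ⟨i, hi⟩
      refine Fin.addCases (fun a hi => ?_) (fun c hi => ?_) i hi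
      · rw [sumMapRight_castAdd] at hi
        have := congrArg Fin.val hi
        simp only [Fin.coe_natAdd, Fin.coe_castAdd] at this
        omega
      · rw [sumMapRight_natAdd] at hi
        exact hc ⟨c, by
          have := congrArg Fin.val hi
          simp only [Fin.coe_natAdd] at this
          exact Fin.ext (by omega)⟩

lemma blockSumPerm_assoc_apply {n₁ n₂ n₃ : ℕ} (σ₁ : Equiv.Perm (Fin n₁))
    (σ₂ : Equiv.Perm (Fin n₂)) (σ₃ : Equiv.Perm (Fin n₃)) (j : Fin (n₁ + n₂ + n₃)) :
    Fin.cast (Nat.add_assoc n₁ n₂ n₃) (blockSumPerm (blockSumPerm σ₁ σ₂) σ₃ j) =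
      blockSumPerm σ₁ (blockSumPerm σ₂ σ₃) (Fin.cast (Nat.add_assoc n₁ n₂ n₃) j) := by
  refine Fin.addCases (fun jj => ?_) (fun c => ?_) j
  · refine Fin.addCases (fun a => ?_) (fun b => ?_) jj
    · have h1 : Fin.cast (Nat.add_assoc n₁ n₂ n₃)
          (Fin.castAdd n₃ (Fin.castAdd n₂ a)) = Fin.castAdd (n₂ + n₃) a := Fin.ext (by simp)
      have h2 : Fin.cast (Nat.add_assoc n₁ n₂ n₃)
          (Fin.castAdd n₃ (Fin.castAdd n₂ (σ₁ a))) = Fin.castAdd (n₂ + n₃) (σ₁ a) :=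
        Fin.ext (by simp)
      rw [blockSumPerm_castAdd, blockSumPerm_castAdd, h2, h1, blockSumPerm_castAdd]
    · have h1 : Fin.cast (Nat.add_assoc n₁ n₂ n₃)
          (Fin.castAdd n₃ (Fin.natAdd n₁ b)) = Fin.natAdd n₁ (Fin.castAdd n₃ b) :=
        Fin.ext (by simp)
      have h2 : Fin.cast (Nat.add_assoc n₁ n₂ n₃)
          (Fin.castAdd n₃ (Fin.natAdd n₁ (σ₂ b))) = Fin.natAdd n₁ (Fin.castAdd n₃ (σ₂ b)) :=
        Fin.ext (by simp)
      rw [blockSumPerm_castAdd, blockSumPerm_natAdd, h2, h1, blockSumPerm_natAdd,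
        blockSumPerm_castAdd]
  · have h1 : Fin.cast (Nat.add_assoc n₁ n₂ n₃) (Fin.natAdd (n₁ + n₂) c) =
        Fin.natAdd n₁ (Fin.natAdd n₂ c) := Fin.ext (by simp [Nat.add_assoc])
    have h2 : Fin.cast (Nat.add_assoc n₁ n₂ n₃) (Fin.natAdd (n₁ + n₂) (σ₃ c)) =
        Fin.natAdd n₁ (Fin.natAdd n₂ (σ₃ c)) := Fin.ext (by simp [Nat.add_assoc])
    rw [blockSumPerm_natAdd, h2, h1, blockSumPerm_natAdd, blockSumPerm_natAdd]

lemma blockSumPerm_assoc {n₁ n₂ n₃ : ℕ} (σ₁ : Equiv.Perm (Fin n₁))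
    (σ₂ : Equiv.Perm (Fin n₂)) (σ₃ : Equiv.Perm (Fin n₃)) :
    (finCongr (Nat.add_assoc n₁ n₂ n₃)).permCongr (blockSumPerm (blockSumPerm σ₁ σ₂) σ₃) =
      blockSumPerm σ₁ (blockSumPerm σ₂ σ₃) := by
  refine Equiv.ext fun i => ?_
  rw [Equiv.permCongr_apply]
  simp only [finCongr_apply, finCongr_symm_apply]
  rw [blockSumPerm_assoc_apply]
  congr 1

lemma blockSumPerm_one_right {n : ℕ} (σ : Equiv.Perm (Fin n)) :
    (finCongr (Nat.add_zero n)).permCongr (blockSumPerm σ (1 : Equiv.Perm (Fin 0))) = σ := by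
  refine Equiv.ext fun i => ?_
  rw [Equiv.permCongr_apply]
  simp only [finCongr_apply, finCongr_symm_apply]
  have h1 : Fin.cast (Nat.add_zero n).symm i = Fin.castAdd 0 i := Fin.ext (by simp)
  rw [h1, blockSumPerm_castAdd]
  exact Fin.ext (by simp)

lemma blockSumPerm_one_left {n : ℕ} (σ : Equiv.Perm (Fin n)) :
    (finCongr (Nat.zero_add n)).permCongr (blockSumPerm (1 : Equiv.Perm (Fin 0)) σ) = σ := by
  refine Equiv.ext fun i => ?_
  rw [Equiv.permCongr_apply]
  simp only [finCongr_apply, finCongr_symm_apply]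
  have h1 : Fin.cast (Nat.zero_add n).symm i = Fin.natAdd 0 i := Fin.ext (by simp)
  rw [h1, blockSumPerm_natAdd]
  exact Fin.ext (by simp)

def mulPre {X : Type} {k : ℕ} (a b : BEPre X k) : BEPre X k :=
  ⟨a.1 + b.1, fun t => blockSumPerm (a.2.1 t) (b.2.1 t), Fin.append a.2.2 b.2.2⟩

lemma mulPre_compat_right {X : Type} (x₀ : X) (k : ℕ) (a b₁ b₂ : BEPre X k)
    (h : BERel X x₀ k b₁ b₂) : BERel X x₀ k (mulPre a b₁) (mulPre a b₂) := by
  obtain ⟨m, n, α, hα, e, x, rfl, rfl⟩ := h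
  obtain ⟨N, E, y⟩ := a
  refine ⟨N + m, N + n, sumMapRight N α, sumMapRight_injective hα,
    fun t => blockSumPerm (E t) (e t), Fin.append y x, ?_, ?_⟩
  · simp only [mulPre]
    congr 1
    exact congrArg _ (extendByBase_sumMapRight x₀ hα x y).symm
  · simp only [mulPre]
    congr 1
    refine congrArg (·, Fin.append y x) ?_
    funext t
    exact (permRestrict_blockSum_right α hα (E t) (e t)).symm

lemma mulPre_compat_left {X : Type} (x₀ : X) (k : ℕ) (a₁ a₂ b : BEPre X k)
    (h : BERel X x₀ k a₁ a₂) : BERel X x₀ k (mulPre a₁ b) (mulPre a₂ b) := by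
  obtain ⟨m, n, α, hα, e, x, rfl, rfl⟩ := h
  obtain ⟨N, E, y⟩ := b
  refine ⟨m + N, n + N, sumMapLeft α N, sumMapLeft_injective hα,
    fun t => blockSumPerm (e t) (E t), Fin.append x y, ?_, ?_⟩
  · simp only [mulPre]
    congr 1
    exact congrArg _ (extendByBase_sumMapLeft x₀ hα x y).symm
  · simp only [mulPre]
    congr 1
    refine congrArg (·, Fin.append x y) ?_
    funext t
    exact (permRestrict_blockSum_left α hα (e t) (E t)).symm

lemma BEPre.mk_cast {X : Type} {k : ℕ} {n n' : ℕ} (h : n = n')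
    (e : Fin (k + 1) → Equiv.Perm (Fin n)) (x : Fin n → X) :
    (⟨n, e, x⟩ : BEPre X k) =
      ⟨n', fun t => (finCongr h).permCongr (e t), x ∘ Fin.cast h.symm⟩ := by
  subst h
  refine congrArg (Sigma.mk n) ?_
  refine Prod.ext ?_ ?_
  · funext t
    exact Equiv.ext fun i => rfl
  · funext j
    rfl

/-- **Block sum of permutations makes the Barratt–Eccles construction a monoid.**
The formula `[σ, x]·[σ', x'] = [σ ⊕ σ', (x, x')]` is independent of representatives and
defines an associative multiplication on the quotient with unit `[(); ()]` (the class of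
the empty tuple). -/
theorem units_traces_barratt_eccles_monoid (X : Type) (x₀ : X) (k : ℕ) :
    ∃ mul : BE X x₀ k → BE X x₀ k → BE X x₀ k,
      -- the multiplication is given on representatives by block sum and concatenation
      (∀ (n n' : ℕ) (e : Fin (k + 1) → Equiv.Perm (Fin n))
          (e' : Fin (k + 1) → Equiv.Perm (Fin n')) (x : Fin n → X) (x' : Fin n' → X),
        mul (Quot.mk _ ⟨n, e, x⟩) (Quot.mk _ ⟨n', e', x'⟩) =
          Quot.mk _ ⟨n + n', fun t => blockSumPerm (e t) (e' t), Fin.append x x'⟩) ∧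
      -- associativity
      (∀ a b c, mul (mul a b) c = mul a (mul b c)) ∧
      -- the empty configuration is a two-sided unit
      (∀ a, mul (Quot.mk _ ⟨0, fun _ => 1, Fin.elim0⟩) a = a ∧
        mul a (Quot.mk _ ⟨0, fun _ => 1, Fin.elim0⟩) = a) := by
  refine ⟨Quot.lift (fun a => Quot.lift (fun b => Quot.mk _ (mulPre a b))
      (fun b₁ b₂ hb => Quot.sound (mulPre_compat_right x₀ k a b₁ b₂ hb)))
      (fun a₁ a₂ ha => funext fun q => Quot.inductionOn q
        (fun b => Quot.sound (mulPre_compat_left x₀ k a₁ a₂ b ha))), ?_, ?_, ?_⟩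
  · intro n n' e e' x x'
    rfl
  · intro a b c
    induction a using Quot.ind with | _ A => ?_
    induction b using Quot.ind with | _ B => ?_
    induction c using Quot.ind with | _ C => ?_
    obtain ⟨n₁, e₁, x₁⟩ := A
    obtain ⟨n₂, e₂, x₂⟩ := B
    obtain ⟨n₃, e₃, x₃⟩ := C
    show Quot.mk _ (mulPre (mulPre ⟨n₁, e₁, x₁⟩ ⟨n₂, e₂, x₂⟩) ⟨n₃, e₃, x₃⟩) =
      Quot.mk _ (mulPre ⟨n₁, e₁, x₁⟩ (mulPre ⟨n₂, e₂, x₂⟩ ⟨n₃, e₃, x₃⟩))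
    apply congrArg (Quot.mk _)
    simp only [mulPre]
    rw [BEPre.mk_cast (Nat.add_assoc n₁ n₂ n₃)]
    refine congrArg (Sigma.mk _) (Prod.ext ?_ ?_)
    · funext t
      exact blockSumPerm_assoc (e₁ t) (e₂ t) (e₃ t)
    · rw [Fin.append_assoc]
      funext j
      rfl
  · intro a
    induction a using Quot.ind with | _ A => ?_
    obtain ⟨n, e, x⟩ := A
    constructor
    · show Quot.mk _ (mulPre ⟨0, fun _ => 1, Fin.elim0⟩ ⟨n, e, x⟩) = Quot.mk _ ⟨n, e, x⟩
      apply congrArg (Quot.mk _)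
      simp only [mulPre]
      rw [BEPre.mk_cast (Nat.zero_add n)]
      refine congrArg (Sigma.mk _) (Prod.ext ?_ ?_)
      · funext t
        exact blockSumPerm_one_left (e t)
      · rw [Fin.elim0_append]
        funext j
        rfl
    · show Quot.mk _ (mulPre ⟨n, e, x⟩ ⟨0, fun _ => 1, Fin.elim0⟩) = Quot.mk _ ⟨n, e, x⟩
      apply congrArg (Quot.mk _)
      simp only [mulPre]
      rw [BEPre.mk_cast (Nat.add_zero n)]
      refine congrArg (Sigma.mk _) (Prod.ext ?_ ?_)
      · funext t
        exact blockSumPerm_one_right (e t)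
      · rw [Fin.append_elim0]
        funext j
        rfl
end
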